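/- Fix an integer k ≥ 2. For every ε > 0 there exists n₀ such that for all n ≥ n₀ and every minimal k-SAT formula G on n variables, there is a subset D of at most ε·n^k clauses of G such that G \ D is simple. -/

import Mathlib

section Defs

variable {V W : Type*}

/-- A clause is a finite set of literals; a literal is a variable paired with a polarity
(`true` = positive, `false` = negative). -/
abbrev SatClause (V : Type*) := Finset (V × Bool)

/-- A formula is a finite set of clauses. -/
abbrev SatFormula (V : Type*) := Finset (SatClause V)

/-- The set of variables used by a clause. -/
def clauseVars [DecidableEq V] (C : SatClause V) : Finset V := C.image Prod.fst

/-- A valid `k`-SAT clause: `k` literals on `k` distinct variables. -/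
def IsKClause [DecidableEq V] (k : ℕ) (C : SatClause V) : Prop :=
  C.card = k ∧ (clauseVars C).card = k

/-- A valid `k`-SAT formula. -/
def IsKFormula [DecidableEq V] (k : ℕ) (G : SatFormula V) : Prop :=
  ∀ C ∈ G, IsKClause k C

/-- An assignment satisfies a clause if it makes all of its literals true. -/
def SatisfiesClause (a : V → Bool) (C : SatClause V) : Prop := ∀ l ∈ C, a l.1 = l.2

/-- A formula is minimal if every clause has a witness assignment satisfying it and no other
clause. -/
def MinimalFormula (G : SatFormula V) : Prop :=
  ∀ C ∈ G, ∃ w : V → Bool, SatisfiesClause w C ∧ ∀ C' ∈ G, SatisfiesClause w C' → C' = C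

/-- A formula is simple if no two distinct clauses use the same set of variables. -/
def SimpleFormula [DecidableEq V] (G : SatFormula V) : Prop :=
  ∀ C ∈ G, ∀ C' ∈ G, clauseVars C = clauseVars C' → C = C'

/-- A formula is unate if every variable occurs with only one polarity. -/
def UnateFormula (G : SatFormula V) : Prop :=
  ∀ x : V, ¬ ((∃ C ∈ G, (x, true) ∈ C) ∧ (∃ C ∈ G, (x, false) ∈ C))

/-- The set of variables used by a formula. -/
def formulaVars [DecidableEq V] (G : SatFormula V) : Finset V := G.biUnion clauseVars

/-- `f` is a `k`-SAT function: it is computed by some `k`-SAT formula (value `1` iff some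
clause has all its literals satisfied). -/
def IsKSatFunction (k n : ℕ) (f : (Fin n → Bool) → Bool) : Prop :=
  ∃ G : SatFormula (Fin n), IsKFormula k G ∧
    ∀ a : Fin n → Bool, f a = true ↔ ∃ C ∈ G, SatisfiesClause a C

/-- Relabel the variables of a formula along `φ`. -/
def mapFormula [DecidableEq V] [DecidableEq W] (φ : W → V) (F : SatFormula W) : SatFormula V :=
  F.image (fun C => C.image (fun l => (φ l.1, l.2)))

/-- `G'` is a copy of `F`: it is obtained from `F` by an injective relabeling of variables. -/
def IsCopyOf [DecidableEq V] [DecidableEq W] (F : SatFormula W) (G' : SatFormula V) : Prop :=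
  ∃ φ : W → V, Set.InjOn φ ↑(formulaVars F) ∧ G' = mapFormula φ F

/-- The number of copies of `F` in `G`, i.e. of subformulae of `G` isomorphic to `F`. -/
noncomputable def copyCount [DecidableEq V] [DecidableEq W] (F : SatFormula W)
    (G : SatFormula V) : ℕ :=
  Set.ncard {G' : SatFormula V | G' ⊆ G ∧ IsCopyOf F G'}

/-- The `b`-blowup of a clause: replace each literal by the literal of the same polarity on
one of the `b` duplicates of its variable, in all possible ways. -/
def clauseBlowup [DecidableEq V] (b : ℕ) (C : SatClause V) :
    Finset (SatClause (V × Fin b)) :=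
  (C.pi (fun _ => (Finset.univ : Finset (Fin b)))).image
    (fun g => C.attach.image (fun l => ((l.1.1, g l.1 l.2), l.1.2)))

/-- The `b`-blowup of a formula. -/
def formulaBlowup [DecidableEq V] (b : ℕ) (G : SatFormula V) : SatFormula (V × Fin b) :=
  G.biUnion (clauseBlowup b)

/-- The weight of a formula on `n` variables:
`wt(G) = Σ_i log₂(i+1)·α_i(G)` where `α_i(G)·C(n,k)` counts the `k`-sets of variables
supporting exactly `i` clauses. -/
noncomputable def formulaWt (k n : ℕ) (G : SatFormula (Fin n)) : ℝ :=
  (∑ S ∈ (Finset.univ : Finset (Fin n)).powersetCard k,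
    Real.logb 2 (((G.filter (fun C => clauseVars C = S)).card : ℝ) + 1)) / (n.choose k)

/-- A partially directed graph: a set of undirected edges together with a set of directed
(pointed) edges. -/
structure PDG (V : Type*) where
  undir : Finset (Finset V)
  dir : Finset (Finset V × V)

/-- `H` is a valid `k`-PDG: all edges have `k` vertices, each directed edge is pointed at one
of its vertices, and each `k`-set carries at most one edge (undirected or directed). -/
def PDG.IsValid (k : ℕ) (H : PDG V) : Prop :=
  (∀ e ∈ H.undir, e.card = k) ∧
  (∀ p ∈ H.dir, p.1.card = k ∧ p.2 ∈ p.1) ∧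
  (∀ p ∈ H.dir, p.1 ∉ H.undir) ∧
  (∀ p ∈ H.dir, ∀ q ∈ H.dir, p.1 = q.1 → p = q)

/-- `F` is a subgraph of `H`: a copy of `F` can be obtained from `H` by deleting vertices,
deleting edges, and/or forgetting directions of edges. -/
def PDG.IsSubgraph [DecidableEq V] (F : PDG W) (H : PDG V) : Prop :=
  ∃ φ : W → V, Function.Injective φ ∧
    (∀ e ∈ F.undir, e.image φ ∈ H.undir ∨ ∃ v, (e.image φ, v) ∈ H.dir) ∧
    (∀ p ∈ F.dir, (p.1.image φ, φ p.2) ∈ H.dir)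

/-- The image of a PDG under a relabeling of vertices. -/
def PDG.map [DecidableEq V] (φ : W → V) (F : PDG W) : PDG V :=
  ⟨F.undir.image (Finset.image φ), F.dir.image (fun p => (p.1.image φ, φ p.2))⟩

/-- The PDG `T_k` on vertex set `{0, …, k}` (0-indexed): undirected edges everything-but-`k`
and everything-but-`k-2`, and the edge everything-but-`k-1` directed toward `k`. -/
def TkPDG (k : ℕ) : PDG (Fin (k + 1)) where
  undir := { Finset.univ.erase ⟨k, Nat.lt_succ_self k⟩,
             Finset.univ.erase ⟨k - 2, by omega⟩ }
  dir := { (Finset.univ.erase ⟨k - 1, by omega⟩, ⟨k, Nat.lt_succ_self k⟩) }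

/-- A semisimple formula: every `k`-set of variables supports at most one clause, or exactly
two clauses whose polarities differ on exactly one variable. -/
def SemisimpleFormula [DecidableEq V] (G : SatFormula V) : Prop :=
  ∀ C₁ ∈ G, ∀ C₂ ∈ G, C₁ ≠ C₂ → clauseVars C₁ = clauseVars C₂ →
    (((C₁ \ C₂).image Prod.fst).card = 1 ∧
      ∀ C₃ ∈ G, clauseVars C₃ = clauseVars C₁ → C₃ = C₁ ∨ C₃ = C₂)

/-- The type of a (semisimple) formula: an undirected edge on each variable set supporting
exactly one clause, and for each variable set supporting two clauses a directed edge pointed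
at the variable where the two clauses differ. -/
def formulaType [DecidableEq V] (G : SatFormula V) : PDG V where
  undir := (G.filter (fun C => ∀ C' ∈ G, clauseVars C' = clauseVars C → C' = C)).image
    clauseVars
  dir := ((G ×ˢ G).filter (fun p => p.1 ≠ p.2 ∧ clauseVars p.1 = clauseVars p.2)).biUnion
    (fun p => ((p.1 \ p.2).image Prod.fst).image (fun v => (clauseVars p.1, v)))

end Defs

section AuxProof

open Finset

section AuxClause
variable {V : Type*} [DecidableEq V]


variable {V : Type*} [DecidableEq V]

/-- The polarity of variable `v` in clause `C`. -/
def polOf (C : SatClause V) (v : V) : Bool := if (v, true) ∈ C then true else false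

lemma injOn_fst {k : ℕ} {C : SatClause V} (hC : IsKClause k C) :
    Set.InjOn Prod.fst (C : Set (V × Bool)) := by
  apply Finset.card_image_iff.mp
  show (C.image Prod.fst).card = C.card
  rw [hC.1]
  exact hC.2

lemma polOf_spec {k : ℕ} {C : SatClause V} (hC : IsKClause k C) {v : V} {b : Bool}
    (h : (v, b) ∈ C) : b = polOf C v := by
  unfold polOf
  by_cases ht : (v, true) ∈ C
  · rw [if_pos ht]
    have := injOn_fst hC (Finset.mem_coe.mpr h) (Finset.mem_coe.mpr ht) rfl
    exact (Prod.mk.injEq _ _ _ _ ▸ this).2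
  · rw [if_neg ht]
    cases b with
    | true => exact absurd h ht
    | false => rfl

lemma polOf_mem {k : ℕ} {C : SatClause V} (hC : IsKClause k C) {v : V}
    (h : v ∈ clauseVars C) : (v, polOf C v) ∈ C := by
  obtain ⟨⟨v', b⟩, hl, h1⟩ := Finset.mem_image.mp h
  simp only at h1
  subst h1
  rw [← polOf_spec hC hl]
  exact hl

lemma sat_iff_pol {k : ℕ} {C : SatClause V} (hC : IsKClause k C) (w : V → Bool) :
    SatisfiesClause w C ↔ ∀ v ∈ clauseVars C, w v = polOf C v := by
  constructor
  · intro hsat v hv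
    exact hsat _ (polOf_mem hC hv)
  · intro h l hl
    have hv : l.1 ∈ clauseVars C := Finset.mem_image_of_mem _ hl
    have h2 : l.2 = polOf C l.1 := polOf_spec hC (show (l.1, l.2) ∈ C by rwa [Prod.mk.eta])
    rw [h _ hv, h2]

lemma clause_eq_of_pol {k : ℕ} {C C' : SatClause V} (hC : IsKClause k C)
    (hC' : IsKClause k C') (hvars : clauseVars C = clauseVars C')
    (hpol : ∀ v ∈ clauseVars C, polOf C v = polOf C' v) : C = C' := by
  apply Finset.eq_of_subset_of_card_le
  · intro l hl
    have hv : l.1 ∈ clauseVars C := Finset.mem_image_of_mem _ hl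
    have h2 : l.2 = polOf C l.1 := polOf_spec hC (show (l.1, l.2) ∈ C by rwa [Prod.mk.eta])
    have h3 : (l.1, polOf C' l.1) ∈ C' := polOf_mem hC' (hvars ▸ hv)
    have : l = (l.1, polOf C' l.1) := by
      rw [← Prod.mk.eta (p := l)]
      rw [h2, hpol _ hv]
    rwa [this]
  · rw [hC.1, hC'.1]

lemma image_orderIsoOfFin {α : Type*} [LinearOrder α] (S : Finset α) {k : ℕ} (h : S.card = k) :
    Finset.image (fun i => ((S.orderIsoOfFin h i : S) : α)) Finset.univ = S := by
  ext v
  simp only [Finset.mem_image, Finset.mem_univ, true_and]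
  constructor
  · rintro ⟨i, rfl⟩
    exact (S.orderIsoOfFin h i).2
  · intro hv
    exact ⟨(S.orderIsoOfFin h).symm ⟨v, hv⟩, by simp⟩

end AuxClause

theorem grid_lemma (k : ℕ) : ∀ ε : ℝ, 0 < ε → ∃ n₀ : ℕ, ∀ n : ℕ, n₀ ≤ n →
    ∀ T : Finset (Fin k → Fin n), (∀ u ∈ T, Function.Injective u) →
    ε * (n : ℝ) ^ k ≤ T.card →
    ∃ v : Fin k → Fin 2 → Fin n, (∀ i, v i 0 ≠ v i 1) ∧
      ∀ σ : Fin k → Fin 2, (fun i => v i (σ i)) ∈ T := by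
  induction k with
  | zero =>
    intro ε hε
    refine ⟨1, fun n hn T hinj hcard => ?_⟩
    have hT : T.Nonempty := by
      rw [← Finset.card_pos]
      have : (0:ℝ) < T.card := lt_of_lt_of_le (by simpa using hε) (by simpa using hcard)
      exact_mod_cast this
    obtain ⟨u, hu⟩ := hT
    refine ⟨fun i => i.elim0, fun i => i.elim0, fun σ => ?_⟩
    have he : (fun i : Fin 0 => (fun (j : Fin 0) => (j.elim0 : Fin 2 → Fin n)) i (σ i)) = u :=
      funext fun i => i.elim0
    rw [he]
    exact hu
  | succ k ih =>
    intro ε hε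
    obtain ⟨m₀, hm₀⟩ := ih (ε ^ 2 / 2) (by positivity)
    refine ⟨max m₀ (⌈(2:ℝ)/ε^2⌉₊ + 1), fun n hn T hinj hcard => ?_⟩
    have hnm : m₀ ≤ n := le_trans (le_max_left _ _) hn
    have hn2 : (2:ℝ)/ε^2 < n := by
      have h1 : (⌈(2:ℝ)/ε^2⌉₊ + 1 : ℕ) ≤ n := le_trans (le_max_right _ _) hn
      calc (2:ℝ)/ε^2 ≤ ⌈(2:ℝ)/ε^2⌉₊ := Nat.le_ceil _
        _ < n := by exact_mod_cast lt_of_lt_of_le (Nat.lt_succ_self _) h1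
    have hnpos : (0:ℝ) < n := lt_of_le_of_lt (by positivity) hn2
    set d : (Fin k → Fin n) → ℕ :=
      fun w => (univ.filter (fun x => Fin.snoc w x ∈ T)).card with hd
    set S : Fin n → Fin n → Finset (Fin k → Fin n) :=
      fun x y => univ.filter (fun w => Fin.snoc w x ∈ T ∧ Fin.snoc w y ∈ T) with hS
    -- T.card = ∑ d
    have hsum : T.card = ∑ w : Fin k → Fin n, d w := by
      rw [Finset.card_eq_sum_card_fiberwise
        (f := fun u => Fin.init u) (t := univ) (fun u _ => mem_univ _)]
      refine Finset.sum_congr rfl fun w _ => ?_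
      refine Finset.card_bij' (fun u _ => u (Fin.last k)) (fun x _ => Fin.snoc w x)
        ?_ ?_ ?_ ?_
      · intro u hu
        obtain ⟨huT, huw⟩ := Finset.mem_filter.mp hu
        simp only [Finset.mem_filter, Finset.mem_univ, true_and]
        rw [← huw, Fin.snoc_init_self]
        exact huT
      · intro x hx
        obtain ⟨-, hxT⟩ := Finset.mem_filter.mp hx
        exact Finset.mem_filter.mpr ⟨hxT, Fin.init_snoc _ _⟩
      · intro u hu
        obtain ⟨-, huw⟩ := Finset.mem_filter.mp hu
        show Fin.snoc w (u (Fin.last k)) = u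
        rw [← huw]
        exact Fin.snoc_init_self u
      · intro x hx
        simp
    -- ∑ over pairs of |S x y| = ∑ d^2
    have hsum2 : ∑ z ∈ (univ ×ˢ univ : Finset (Fin n × Fin n)), (S z.1 z.2).card
        = ∑ w : Fin k → Fin n, d w * d w := by
      have h1 : ∀ z : Fin n × Fin n, (S z.1 z.2).card =
          ∑ w : Fin k → Fin n, (if Fin.snoc w z.1 ∈ T ∧ Fin.snoc w z.2 ∈ T then 1 else 0) := by
        intro z
        exact Finset.card_filter _ _
      have h2 : ∀ w : Fin k → Fin n, d w * d w =
          ∑ z ∈ (univ ×ˢ univ : Finset (Fin n × Fin n)),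
            (if Fin.snoc w z.1 ∈ T ∧ Fin.snoc w z.2 ∈ T then 1 else 0) := by
        intro w
        calc d w * d w
            = ((univ.filter fun x => Fin.snoc w x ∈ T) ×ˢ
                (univ.filter fun y => Fin.snoc w y ∈ T)).card := by
              rw [Finset.card_product]
          _ = ((univ ×ˢ univ).filter
                fun z : Fin n × Fin n => Fin.snoc w z.1 ∈ T ∧ Fin.snoc w z.2 ∈ T).card := by
              rw [Finset.filter_product (p := fun x => Fin.snoc w x ∈ T)
                (q := fun y => Fin.snoc w y ∈ T)]
          _ = _ := Finset.card_filter _ _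
      simp only [h1, h2]
      exact Finset.sum_comm
    -- cast to ℝ and estimate
    have hNk : (Fintype.card (Fin k → Fin n) : ℝ) = (n:ℝ) ^ k := by
      simp [Fintype.card_fun]
    have hNk1 : (Fintype.card (Fin (k+1) → Fin n) : ℝ) = (n:ℝ) ^ (k+1) := by
      simp [Fintype.card_fun]
    have hTle : (T.card : ℝ) ≤ (n:ℝ) ^ (k+1) := by
      rw [← hNk1]
      exact_mod_cast Finset.card_le_univ T
    have hsumR : (∑ w : Fin k → Fin n, (d w : ℝ)) = T.card := by
      rw [hsum]; push_cast; ring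
    have hCS : ((T.card : ℝ))^2 ≤ (n:ℝ)^k * ∑ w : Fin k → Fin n, (d w : ℝ)^2 := by
      have := sq_sum_le_card_mul_sum_sq (s := (univ : Finset (Fin k → Fin n)))
        (f := fun w => (d w : ℝ))
      rw [hsumR] at this
      calc ((T.card : ℝ))^2 ≤ (#(univ : Finset (Fin k → Fin n)) : ℝ) *
            ∑ w : Fin k → Fin n, (d w : ℝ)^2 := this
        _ = (n:ℝ)^k * ∑ w : Fin k → Fin n, (d w : ℝ)^2 := by
            rw [Finset.card_univ, hNk]
    have hsum2R : (∑ z ∈ (univ ×ˢ univ : Finset (Fin n × Fin n)), ((S z.1 z.2).card : ℝ))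
        = ∑ w : Fin k → Fin n, (d w : ℝ)^2 := by
      have := congrArg (fun m : ℕ => (m : ℝ)) hsum2
      push_cast at this
      rw [this]
      exact Finset.sum_congr rfl fun w _ => (sq ((d w : ℝ))).symm
    have hd2 : (ε:ℝ)^2 * (n:ℝ)^(k+2) ≤ ∑ w : Fin k → Fin n, (d w : ℝ)^2 := by
      have hpow : (0:ℝ) < (n:ℝ)^k := by positivity
      rw [← mul_le_mul_iff_right₀ hpow]
      calc (n:ℝ)^k * (ε^2 * (n:ℝ)^(k+2)) = (ε * (n:ℝ)^(k+1))^2 := by ring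
        _ ≤ ((T.card : ℝ))^2 := by
            have h0 : (0:ℝ) ≤ ε * (n:ℝ)^(k+1) := by positivity
            exact pow_le_pow_left₀ h0 hcard 2
        _ ≤ _ := hCS
    -- diagonal sum bound
    have hdiag : (∑ z ∈ ((univ ×ˢ univ : Finset (Fin n × Fin n)).filter
        (fun z => z.1 = z.2)), ((S z.1 z.2).card : ℝ)) ≤ (n:ℝ)^(k+1) := by
      have hc : (((univ ×ˢ univ : Finset (Fin n × Fin n)).filter
          (fun z => z.1 = z.2)).card : ℝ) ≤ (n:ℝ) := by
        have : ((univ ×ˢ univ : Finset (Fin n × Fin n)).filter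
            (fun z => z.1 = z.2)) = Finset.diag univ := by
          ext z; simp [Finset.mem_diag]
        rw [this, Finset.diag_card]
        simp
      have hterm : ∀ z ∈ ((univ ×ˢ univ : Finset (Fin n × Fin n)).filter
          (fun z => z.1 = z.2)), ((S z.1 z.2).card : ℝ) ≤ (n:ℝ)^k := by
        intro z _
        rw [← hNk]
        exact_mod_cast Finset.card_le_univ _
      calc (∑ z ∈ ((univ ×ˢ univ : Finset (Fin n × Fin n)).filter
            (fun z => z.1 = z.2)), ((S z.1 z.2).card : ℝ))
          ≤ (((univ ×ˢ univ : Finset (Fin n × Fin n)).filter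
            (fun z => z.1 = z.2)).card : ℝ) * (n:ℝ)^k := by
            have := Finset.sum_le_card_nsmul _ _ ((n:ℝ)^k) hterm
            simpa [nsmul_eq_mul] using this
        _ ≤ (n:ℝ) * (n:ℝ)^k := by
            have : (0:ℝ) ≤ (n:ℝ)^k := by positivity
            exact mul_le_mul_of_nonneg_right hc this
        _ = (n:ℝ)^(k+1) := by ring
    set E := ((univ ×ˢ univ : Finset (Fin n × Fin n)).filter (fun z => ¬ z.1 = z.2)) with hE
    have hsplit : (∑ z ∈ (univ ×ˢ univ : Finset (Fin n × Fin n)), ((S z.1 z.2).card : ℝ))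
        = (∑ z ∈ ((univ ×ˢ univ : Finset (Fin n × Fin n)).filter
            (fun z => z.1 = z.2)), ((S z.1 z.2).card : ℝ))
          + ∑ z ∈ E, ((S z.1 z.2).card : ℝ) := by
      rw [hE]
      exact (Finset.sum_filter_add_sum_filter_not _ _ _).symm
    have hElower : ε^2/2 * (n:ℝ)^(k+2) < ∑ z ∈ E, ((S z.1 z.2).card : ℝ) := by
      have h1 : ∑ z ∈ E, ((S z.1 z.2).card : ℝ)
          ≥ ε^2 * (n:ℝ)^(k+2) - (n:ℝ)^(k+1) := by
        have := hsplit
        rw [hsum2R] at this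
        nlinarith [hd2, hdiag]
      have h2 : ε^2/2 * (n:ℝ)^(k+2) < ε^2 * (n:ℝ)^(k+2) - (n:ℝ)^(k+1) := by
        have hn1 : (2:ℝ) < ε^2 * (n:ℝ) := by
          rw [div_lt_iff₀ (by positivity)] at hn2
          linarith
        have hp : (0:ℝ) < (n:ℝ)^(k+1) := by positivity
        have : (n:ℝ)^(k+2) = (n:ℝ)^(k+1) * (n:ℝ) := by ring
        nlinarith
      linarith
    -- pigeonhole
    have hex : ∃ z ∈ E, ε^2/2 * (n:ℝ)^k ≤ ((S z.1 z.2).card : ℝ) := by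
      by_contra hcon
      push_neg at hcon
      have hsumle : ∑ z ∈ E, ((S z.1 z.2).card : ℝ) ≤ (E.card : ℝ) * (ε^2/2 * (n:ℝ)^k) := by
        have := Finset.sum_le_card_nsmul E (fun z => ((S z.1 z.2).card : ℝ))
          (ε^2/2 * (n:ℝ)^k) (fun z hz => le_of_lt (hcon z hz))
        simpa [nsmul_eq_mul] using this
      have hEcard : (E.card : ℝ) ≤ (n:ℝ) * (n:ℝ) := by
        have h1 : E.card ≤ ((univ ×ˢ univ : Finset (Fin n × Fin n))).card :=
          Finset.card_filter_le _ _
        have h2 : ((univ ×ˢ univ : Finset (Fin n × Fin n))).card = n * n := by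
          simp [Finset.card_product]
        rw [h2] at h1
        exact_mod_cast h1
      have : ∑ z ∈ E, ((S z.1 z.2).card : ℝ) ≤ ε^2/2 * (n:ℝ)^(k+2) := by
        calc ∑ z ∈ E, ((S z.1 z.2).card : ℝ) ≤ (E.card : ℝ) * (ε^2/2 * (n:ℝ)^k) := hsumle
          _ ≤ (n:ℝ) * (n:ℝ) * (ε^2/2 * (n:ℝ)^k) := by
              have : (0:ℝ) ≤ ε^2/2 * (n:ℝ)^k := by positivity
              exact mul_le_mul_of_nonneg_right hEcard this
          _ = ε^2/2 * (n:ℝ)^(k+2) := by ring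
      linarith
    obtain ⟨z, hzE, hzcard⟩ := hex
    have hzne : z.1 ≠ z.2 := (Finset.mem_filter.mp hzE).2
    have hSinj : ∀ w ∈ S z.1 z.2, Function.Injective w := by
      intro w hw
      obtain ⟨-, hw1, -⟩ := Finset.mem_filter.mp hw
      intro i j hij
      have h2 : Fin.snoc (α := fun _ => Fin n) w z.1 (Fin.castSucc i)
          = Fin.snoc (α := fun _ => Fin n) w z.1 (Fin.castSucc j) := by
        simp only [Fin.snoc_castSucc]
        exact hij
      have := hinj _ hw1 h2
      exact Fin.castSucc_injective k this
    obtain ⟨v', h01, hσ'⟩ := hm₀ n hnm (S z.1 z.2) hSinj hzcard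
    have g : Fin 2 → Fin n := fun b => if b = 0 then z.1 else z.2
    set v : Fin (k+1) → Fin 2 → Fin n :=
      Fin.snoc (α := fun _ => Fin 2 → Fin n) v' (fun b => if b = 0 then z.1 else z.2) with hv
    have hvlast : v (Fin.last k) = fun b => if b = 0 then z.1 else z.2 := by
      rw [hv]
      exact Fin.snoc_last _ _
    have hvcast : ∀ j : Fin k, v (Fin.castSucc j) = v' j := by
      intro j
      rw [hv]
      exact Fin.snoc_castSucc _ _ _
    refine ⟨v, ?_, ?_⟩
    · intro i
      refine Fin.lastCases ?_ ?_ i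
      · rw [hvlast]
        simpa using hzne
      · intro j
        rw [hvcast j]
        exact h01 j
    · intro σ
      have hw : (fun i => v' i (σ (Fin.castSucc i))) ∈ S z.1 z.2 := hσ' _
      obtain ⟨-, hw1, hw2⟩ := Finset.mem_filter.mp hw
      have heq : (fun i => v i (σ i))
          = Fin.snoc (α := fun _ => Fin n) (fun i => v' i (σ (Fin.castSucc i)))
              (if σ (Fin.last k) = 0 then z.1 else z.2) := by
        funext i
        refine Fin.lastCases ?_ ?_ i
        · rw [hvlast, Fin.snoc_last]
        · intro j
          rw [hvcast j, Fin.snoc_castSucc]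
      rw [heq]
      by_cases hb : σ (Fin.last k) = 0
      · rw [if_pos hb]; exact hw1
      · rw [if_neg hb]; exact hw2

theorem nonsimple_bound (k : ℕ) (δ : ℝ) (hδ : 0 < δ) :
    ∃ n₀ : ℕ, ∀ n : ℕ, n₀ ≤ n → ∀ G : SatFormula (Fin n), IsKFormula k G →
      MinimalFormula G →
      (((G.filter (fun C => ∃ C' ∈ G, clauseVars C' = clauseVars C ∧ C' ≠ C)).image
        clauseVars).card : ℝ) ≤ δ * (n:ℝ)^k := by
  have h4pos : (0:ℝ) < (4:ℝ)^k := by positivity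
  obtain ⟨m₀, hg⟩ := grid_lemma k (δ / 4^k) (by positivity)
  refine ⟨max m₀ 1, fun n hn G hkG hmin => ?_⟩
  have hnm : m₀ ≤ n := le_trans (le_max_left _ _) hn
  have hn1 : 1 ≤ n := le_trans (le_max_right _ _) hn
  set H := (G.filter (fun C => ∃ C' ∈ G, clauseVars C' = clauseVars C ∧ C' ≠ C)).image
    clauseVars with hH
  by_contra hcon
  push_neg at hcon
  -- choice of clause pairs
  have hexPair : ∀ S : Finset (Fin n), ∃ CC : SatClause (Fin n) × SatClause (Fin n),
      S ∈ H → CC.1 ∈ G ∧ CC.2 ∈ G ∧ clauseVars CC.1 = S ∧ clauseVars CC.2 = S ∧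
        CC.1 ≠ CC.2 := by
    intro S
    by_cases hS : S ∈ H
    · obtain ⟨C, hC, hCS⟩ := Finset.mem_image.mp hS
      have hCf := Finset.mem_filter.mp hC
      obtain ⟨C', hC'G, hC'vars, hne⟩ := hCf.2
      exact ⟨(C, C'), fun _ =>
        ⟨hCf.1, hC'G, hCS, by rw [hC'vars, hCS], fun h => hne h.symm⟩⟩
    · exact ⟨(∅, ∅), fun h => absurd h hS⟩
  choose FC hFC using hexPair
  -- cards of members of H
  have hHcard : ∀ S ∈ H, S.card = k := by
    intro S hS
    obtain ⟨C, hC, hCS⟩ := Finset.mem_image.mp hS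
    rw [← hCS]
    exact (hkG C (Finset.mem_of_mem_filter _ hC)).2
  -- tuple enumeration of a set
  set tup : Finset (Fin n) → (Fin k → Fin n) := fun S =>
    if h : S.card = k then (fun i => ((S.orderIsoOfFin h i : S) : Fin n))
    else fun _ => ⟨0, by omega⟩ with htup
  have htup_img : ∀ S ∈ H, Finset.image (tup S) Finset.univ = S := by
    intro S hS
    have hc := hHcard S hS
    ext x
    simp only [htup, dif_pos hc, Finset.mem_image, Finset.mem_univ, true_and]
    constructor
    · rintro ⟨i, rfl⟩
      exact ((S.orderIsoOfFin hc) i).2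
    · intro hx
      exact ⟨(S.orderIsoOfFin hc).symm ⟨x, hx⟩, by simp⟩
  have htup_inj : ∀ S ∈ H, Function.Injective (tup S) := by
    intro S hS
    have hc := hHcard S hS
    intro i j hij
    rw [htup] at hij
    simp only [dif_pos hc] at hij
    exact (S.orderIsoOfFin hc).injective (Subtype.ext hij)
  -- coloring
  set colorOf : Finset (Fin n) → (Fin k → Bool × Bool) := fun S i =>
    (polOf (FC S).1 (tup S i), polOf (FC S).2 (tup S i)) with hcolorOf
  -- pigeonhole over colors
  have hfib : H.card = ∑ f : Fin k → Bool × Bool,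
      (H.filter (fun S => colorOf S = f)).card :=
    Finset.card_eq_sum_card_fiberwise (fun S _ => Finset.mem_univ (colorOf S))
  have hcolcard : (Fintype.card (Fin k → Bool × Bool) : ℝ) = (4:ℝ)^k := by
    simp [Fintype.card_fun]
  have hexf : ∃ f : Fin k → Bool × Bool,
      δ / 4^k * (n:ℝ)^k ≤ ((H.filter (fun S => colorOf S = f)).card : ℝ) := by
    by_contra hcf
    push_neg at hcf
    have : (H.card : ℝ) < δ * (n:ℝ)^k := by
      calc (H.card : ℝ) = ∑ f : Fin k → Bool × Bool,
            ((H.filter (fun S => colorOf S = f)).card : ℝ) := by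
            rw [hfib]; push_cast; ring
        _ < ∑ _f : Fin k → Bool × Bool, δ / 4^k * (n:ℝ)^k := by
            apply Finset.sum_lt_sum_of_nonempty
            · exact Finset.univ_nonempty
            · intro f _
              exact hcf f
        _ = (Fintype.card (Fin k → Bool × Bool) : ℝ) * (δ / 4^k * (n:ℝ)^k) := by
            rw [Finset.sum_const, Finset.card_univ, nsmul_eq_mul]
        _ = δ * (n:ℝ)^k := by
            rw [hcolcard]
            field_simp
    linarith [hcon]
  obtain ⟨f, hf⟩ := hexf
  set Hf := H.filter (fun S => colorOf S = f) with hHf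
  set T := Hf.image tup with hT
  have hTcard : T.card = Hf.card := by
    apply Finset.card_image_of_injOn
    intro S hS S' hS' hss
    have h1 : S ∈ H := Finset.mem_of_mem_filter _ hS
    have h2 : S' ∈ H := Finset.mem_of_mem_filter _ hS'
    rw [← htup_img S h1, ← htup_img S' h2, hss]
  have hTinj : ∀ u ∈ T, Function.Injective u := by
    intro u hu
    obtain ⟨S, hS, rfl⟩ := Finset.mem_image.mp hu
    exact htup_inj S (Finset.mem_of_mem_filter _ hS)
  have hTbig : δ / 4^k * (n:ℝ)^k ≤ T.card := by
    rw [hTcard]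
    exact hf
  obtain ⟨v, hv01, hσ⟩ := hg n hnm T hTinj hTbig
  -- extract the sets and clauses of the grid
  choose SS hSS htupSS using fun σ : Fin k → Fin 2 => Finset.mem_image.mp (hσ σ)
  have hSSH : ∀ σ, SS σ ∈ H := fun σ => Finset.mem_of_mem_filter _ (hSS σ)
  have hSScol : ∀ σ, colorOf (SS σ) = f := fun σ => (Finset.mem_filter.mp (hSS σ)).2
  set p : Fin k → Bool := fun i => (f i).1 with hp
  set p' : Fin k → Bool := fun i => (f i).2 with hp'
  have hC1G : ∀ σ, (FC (SS σ)).1 ∈ G := fun σ => (hFC _ (hSSH σ)).1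
  have hC2G : ∀ σ, (FC (SS σ)).2 ∈ G := fun σ => (hFC _ (hSSH σ)).2.1
  have hv1 : ∀ σ, clauseVars (FC (SS σ)).1 = SS σ := fun σ => (hFC _ (hSSH σ)).2.2.1
  have hv2 : ∀ σ, clauseVars (FC (SS σ)).2 = SS σ := fun σ => (hFC _ (hSSH σ)).2.2.2.1
  have hne12 : ∀ σ, (FC (SS σ)).1 ≠ (FC (SS σ)).2 := fun σ => (hFC _ (hSSH σ)).2.2.2.2
  have hK1 : ∀ σ, IsKClause k (FC (SS σ)).1 := fun σ => hkG _ (hC1G σ)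
  have hK2 : ∀ σ, IsKClause k (FC (SS σ)).2 := fun σ => hkG _ (hC2G σ)
  have hSSimg : ∀ σ, SS σ = Finset.image (fun i => v i (σ i)) Finset.univ := by
    intro σ
    rw [← htupSS σ]
    exact (htup_img _ (hSSH σ)).symm
  have hmemvars : ∀ σ i, v i (σ i) ∈ SS σ := by
    intro σ i
    rw [hSSimg σ]
    exact Finset.mem_image_of_mem _ (Finset.mem_univ i)
  have hpol1 : ∀ σ i, polOf (FC (SS σ)).1 (v i (σ i)) = p i := by
    intro σ i
    have h1 := congrArg Prod.fst (congrFun (hSScol σ) i)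
    simp only [hcolorOf] at h1
    rw [htupSS σ] at h1
    exact h1
  have hpol2 : ∀ σ i, polOf (FC (SS σ)).2 (v i (σ i)) = p' i := by
    intro σ i
    have h1 := congrArg Prod.snd (congrFun (hSScol σ) i)
    simp only [hcolorOf] at h1
    rw [htupSS σ] at h1
    exact h1
  have hmemC1 : ∀ σ i, (v i (σ i), p i) ∈ (FC (SS σ)).1 := by
    intro σ i
    have := polOf_mem (hK1 σ) (v := v i (σ i)) (by rw [hv1 σ]; exact hmemvars σ i)
    rwa [hpol1 σ i] at this
  have hmemC2 : ∀ σ i, (v i (σ i), p' i) ∈ (FC (SS σ)).2 := by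
    intro σ i
    have := polOf_mem (hK2 σ) (v := v i (σ i)) (by rw [hv2 σ]; exact hmemvars σ i)
    rwa [hpol2 σ i] at this
  have hlit1 : ∀ σ, ∀ l ∈ (FC (SS σ)).1, ∃ j, l = (v j (σ j), p j) := by
    intro σ l hl
    have hv' : l.1 ∈ clauseVars (FC (SS σ)).1 := Finset.mem_image_of_mem _ hl
    rw [hv1 σ, hSSimg σ] at hv'
    obtain ⟨j, -, hj⟩ := Finset.mem_image.mp hv'
    refine ⟨j, ?_⟩
    have h2 : l.2 = polOf (FC (SS σ)).1 l.1 :=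
      polOf_spec (hK1 σ) (show (l.1, l.2) ∈ _ by rwa [Prod.mk.eta])
    rw [← Prod.mk.eta (p := l), h2, ← hj, hpol1 σ j]
  have hlit2 : ∀ σ, ∀ l ∈ (FC (SS σ)).2, ∃ j, l = (v j (σ j), p' j) := by
    intro σ l hl
    have hv' : l.1 ∈ clauseVars (FC (SS σ)).2 := Finset.mem_image_of_mem _ hl
    rw [hv2 σ, hSSimg σ] at hv'
    obtain ⟨j, -, hj⟩ := Finset.mem_image.mp hv'
    refine ⟨j, ?_⟩
    have h2 : l.2 = polOf (FC (SS σ)).2 l.1 :=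
      polOf_spec (hK2 σ) (show (l.1, l.2) ∈ _ by rwa [Prod.mk.eta])
    rw [← Prod.mk.eta (p := l), h2, ← hj, hpol2 σ j]
  -- the witness of the all-zeros clause
  set σ₀ : Fin k → Fin 2 := fun _ => 0 with hσ₀
  obtain ⟨w, hwsat, hwuniq⟩ := hmin _ (hC1G σ₀)
  have hw0 : ∀ i, w (v i 0) = p i := by
    intro i
    have := hwsat _ (hmemC1 σ₀ i)
    simpa using this
  -- basic distinctness
  set e : Fin k → (Fin k → Fin 2) := fun i j => if j = i then 1 else 0 with he
  have hdist : ∀ i j, j ≠ i → v j 0 ≠ v i 1 := by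
    intro i j hji heq
    have hinj' : Function.Injective (fun j' => v j' (e i j')) := by
      rw [← htupSS (e i)]
      exact htup_inj _ (hSSH (e i))
    have : v j (e i j) = v i (e i i) := by
      rw [he]
      simp only [if_neg hji, if_pos rfl]
      exact heq
    exact hji (hinj' this)
  -- step 1 : w (v i 1) = !(p i)
  have hstep1 : ∀ i, w (v i 1) = !(p i) := by
    intro i
    have hnotsat : ¬ SatisfiesClause w (FC (SS (e i))).1 := by
      intro hsat
      have heqC : (FC (SS (e i))).1 = (FC (SS σ₀)).1 := hwuniq _ (hC1G (e i)) hsat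
      have hSeq : SS (e i) = SS σ₀ := by
        rw [← hv1 (e i), ← hv1 σ₀, heqC]
      have hmem1 : v i 1 ∈ SS σ₀ := by
        rw [← hSeq]
        have := hmemvars (e i) i
        rwa [show e i i = 1 by rw [he]; simp] at this
      rw [hSSimg σ₀] at hmem1
      obtain ⟨j, -, hj⟩ := Finset.mem_image.mp hmem1
      by_cases hji : j = i
      · subst hji
        exact hv01 j (by rw [hσ₀] at hj; exact hj)
      · exact hdist i j hji (by rw [hσ₀] at hj; exact hj)
    have : ∃ l ∈ (FC (SS (e i))).1, w l.1 ≠ l.2 := by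
      by_contra hc
      push_neg at hc
      exact hnotsat hc
    obtain ⟨l, hl, hlne⟩ := this
    obtain ⟨j, rfl⟩ := hlit1 (e i) l hl
    by_cases hji : j = i
    · subst hji
      have hj1 : e j j = 1 := by rw [he]; simp
      rw [hj1] at hlne
      have hlne' : w (v j 1) ≠ p j := by simpa using hlne
      exact Bool.eq_not_iff.mpr hlne'
    · have hj0 : e i j = 0 := by rw [he]; simp [hji]
      rw [hj0] at hlne
      have hlne' : w (v j 0) ≠ p j := by simpa using hlne
      exact absurd (hw0 j) hlne'
  -- step 2 : p ≠ p' somewhere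
  have hstep2 : ∃ i₀, p i₀ ≠ p' i₀ := by
    by_contra hc
    push_neg at hc
    apply hne12 σ₀
    apply clause_eq_of_pol (hK1 σ₀) (hK2 σ₀)
    · rw [hv1 σ₀, hv2 σ₀]
    · intro x hx
      rw [hv1 σ₀, hSSimg σ₀] at hx
      obtain ⟨j, -, hj⟩ := Finset.mem_image.mp hx
      rw [← hj]
      have h1 := hpol1 σ₀ j
      have h2 := hpol2 σ₀ j
      rw [hσ₀] at h1 h2
      simp only at h1 h2
      rw [h1, h2]
      exact hc j
  obtain ⟨i₀, hi₀⟩ := hstep2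
  -- step 3 : contradiction via σ*
  set σs : Fin k → Fin 2 := fun i => if p i = p' i then 0 else 1 with hσs
  have hsat' : SatisfiesClause w (FC (SS σs)).2 := by
    intro l hl
    obtain ⟨j, rfl⟩ := hlit2 σs l hl
    simp only
    by_cases hpj : p j = p' j
    · have : σs j = 0 := by rw [hσs]; simp [hpj]
      rw [this, hw0 j, hpj]
    · have h1 : σs j = 1 := by rw [hσs]; simp [hpj]
      rw [h1, hstep1 j]
      exact (Bool.eq_not_iff.mpr (fun h => hpj h.symm)).symm
  have heqC : (FC (SS σs)).2 = (FC (SS σ₀)).1 := hwuniq _ (hC2G σs) hsat'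
  have hSeq : SS σs = SS σ₀ := by
    rw [← hv2 σs, ← hv1 σ₀, heqC]
  have hmem1 : v i₀ 1 ∈ SS σ₀ := by
    rw [← hSeq]
    have := hmemvars σs i₀
    rwa [show σs i₀ = 1 by rw [hσs]; simp [hi₀]] at this
  rw [hSSimg σ₀] at hmem1
  obtain ⟨j, -, hj⟩ := Finset.mem_image.mp hmem1
  by_cases hji : j = i₀
  · subst hji
    exact hv01 j (by rw [hσ₀] at hj; exact hj)
  · exact hdist i₀ j hji (by rw [hσ₀] at hj; exact hj)

end AuxProof

/-- Fix `k ≥ 2`. For every `ε > 0` there is `n₀` such that for all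
`n ≥ n₀`, every minimal `k`-SAT formula on `n` variables can be made simple by deleting at
most `ε·n^k` clauses. -/
theorem minimal_nearly_simple (k : ℕ) (hk : 2 ≤ k) (ε : ℝ) (hε : 0 < ε) :
    ∃ n₀ : ℕ, ∀ n ≥ n₀, ∀ G : SatFormula (Fin n), IsKFormula k G → MinimalFormula G →
      ∃ D ⊆ G, (D.card : ℝ) ≤ ε * n ^ k ∧ SimpleFormula (G \ D) := by
  classical
  have hBpos : (0:ℝ) < ((2*k).choose k : ℝ) := by
    exact_mod_cast Nat.choose_pos (by omega)
  obtain ⟨n₀, hn₀⟩ := nonsimple_bound k (ε / ((2*k).choose k)) (by positivity)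
  refine ⟨n₀, fun n hn G hkG hmin => ?_⟩
  set D := G.filter (fun C => ∃ C' ∈ G, clauseVars C' = clauseVars C ∧ C' ≠ C) with hD
  refine ⟨D, Finset.filter_subset _ _, ?_, ?_⟩
  · have h1 : D.card ≤ ((2*k).choose k) * (D.image clauseVars).card := by
      apply Finset.card_le_mul_card_image
      intro S hS
      have hSc : S.card = k := by
        obtain ⟨C, hC, rfl⟩ := Finset.mem_image.mp hS
        exact (hkG C (Finset.mem_of_mem_filter _ hC)).2
      have hsub : D.filter (fun C => clauseVars C = S) ⊆
          (S ×ˢ (Finset.univ : Finset Bool)).powersetCard k := by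
        intro C hC
        obtain ⟨hCD, hCS⟩ := Finset.mem_filter.mp hC
        rw [Finset.mem_powersetCard]
        constructor
        · intro l hl
          rw [Finset.mem_product]
          exact ⟨hCS ▸ Finset.mem_image_of_mem _ hl, Finset.mem_univ _⟩
        · exact (hkG C (Finset.mem_of_mem_filter _ hCD)).1
      calc (D.filter (fun C => clauseVars C = S)).card
          ≤ ((S ×ˢ (Finset.univ : Finset Bool)).powersetCard k).card :=
            Finset.card_le_card hsub
        _ = ((S ×ˢ (Finset.univ : Finset Bool)).card).choose k :=
            Finset.card_powersetCard _ _
        _ = (2*k).choose k := by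
            rw [Finset.card_product, hSc]
            simp [mul_comm]
    have h2 := hn₀ n hn G hkG hmin
    calc (D.card : ℝ)
        ≤ ((2*k).choose k : ℝ) * ((D.image clauseVars).card : ℝ) := by exact_mod_cast h1
      _ ≤ ((2*k).choose k : ℝ) * (ε / ((2*k).choose k) * (n:ℝ)^k) := by
          apply mul_le_mul_of_nonneg_left _ (le_of_lt hBpos)
          exact h2
      _ = ε * (n:ℝ)^k := by field_simp
  · intro C hC C' hC' hvars
    by_contra hne
    have hCmem := Finset.mem_sdiff.mp hC
    have hC'mem := Finset.mem_sdiff.mp hC'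
    apply hCmem.2
    rw [hD]
    exact Finset.mem_filter.mpr ⟨hCmem.1, ⟨C', hC'mem.1, hvars.symm, fun h => hne h.symm⟩⟩
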